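/- Let A and B be nonempty closed subsets of ℝⁿ, b* ∈ A ∩ B, and σ ∈ (0,1). Suppose B has σ-slowly vanishing reach with respect to A at b* with rate τ ∈ [0,1). Then B is (1−σ)-Hölder regular with respect to A at b* with any constant c > 0 satisfying (τ/2)·√(2+c) < 1. -/

import Mathlib

open Set Metric Filter Topology RealInnerProductSpace
open scoped ENNReal

variable {E : Type*} [NormedAddCommGroup E] [InnerProductSpace ℝ E]

/-- The (possibly set-valued) metric projection onto a set `S`. -/
noncomputable def projSet (S : Set E) (x : E) : Set E :=
  {s | s ∈ S ∧ ‖x - s‖ = Metric.infDist x S}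

/-- The reach of `B` at `b` along the direction `d`, as an element of `[0,∞]`. -/
noncomputable def reach (B : Set E) (b d : E) : ℝ≥0∞ :=
  sSup {R : ℝ≥0∞ | ∀ t : ℝ, 0 ≤ t → ENNReal.ofReal t ≤ R → projSet B (b + t • d) = {b}}

/-- `B` has `σ`-slowly vanishing reach with respect to `A` at `bs` with rate `τ`. -/
def SlowlyVanishingReach (A B : Set E) (bs : E) (σ τ : ℝ) : Prop :=
  ∀ τ' : ℝ, τ < τ' → ∃ δ > (0:ℝ), ∀ a ∈ A, ‖a - bs‖ < δ → a ∉ B → ∀ b ∈ projSet B a,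
    ENNReal.ofReal (‖a - b‖ ^ σ) ≤ ENNReal.ofReal τ' * reach B b (‖a - b‖⁻¹ • (a - b))

/-- `B` is `σ`-Hölder regular with respect to `A` at `bs` with constant `c`. -/
def HolderRegular (A B : Set E) (bs : E) (σ c : ℝ) : Prop :=
  ∃ U ∈ nhds bs, ∀ a' ∈ A ∩ U, ∀ b' ∈ projSet B a' ∩ U, ∀ b ∈ B,
    ‖b - a'‖ ≤ (1 + c) * ‖a' - b'‖ → a' ∈ projSet A b →
    ⟪a' - b', b - b'⟫ ≤ Real.sqrt c * ‖a' - b'‖ ^ (σ + 1) * ‖b - b'‖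

set_option maxHeartbeats 1000000 in
theorem stmt7 {n : ℕ} (A B : Set (EuclideanSpace ℝ (Fin n)))
    (hAne : A.Nonempty) (hBne : B.Nonempty) (hAc : IsClosed A) (hBc : IsClosed B)
    (bs : EuclideanSpace ℝ (Fin n)) (hbs : bs ∈ A ∩ B)
    (σ τ : ℝ) (hσ : σ ∈ Set.Ioo (0:ℝ) 1) (hτ : τ ∈ Set.Ico (0:ℝ) 1)
    (hsvr : SlowlyVanishingReach A B bs σ τ) :
    ∀ c : ℝ, 0 < c → (τ / 2) * Real.sqrt (2 + c) < 1 →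
      HolderRegular A B bs (1 - σ) c := by
  intro c hc hτc
  have h2c : (0:ℝ) < 2 + c := by linarith
  have hsq : (0:ℝ) < Real.sqrt (2 + c) := Real.sqrt_pos.mpr h2c
  set L : ℝ := 2 / Real.sqrt (2 + c) with hLdef
  clear_value L
  have hL : τ < L := by
    rw [hLdef, lt_div_iff₀ hsq]; linarith
  set τ'' : ℝ := τ + 2 * (L - τ) / 3 with hτ''def
  set τ' : ℝ := τ + (L - τ) / 3 with hτ'def
  clear_value τ' τ''
  have hττ' : τ < τ' := by rw [hτ'def]; linarith
  have hτ'τ'' : τ' < τ'' := by rw [hτ'def, hτ''def]; linarith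
  have hτ''L : τ'' < L := by rw [hτ''def]; linarith
  have hτ'pos : 0 < τ' := lt_of_le_of_lt hτ.1 hττ'
  have hτ''pos : 0 < τ'' := lt_trans hτ'pos hτ'τ''
  have hsq2 : Real.sqrt (2 + c) ^ 2 = 2 + c := Real.sq_sqrt h2c.le
  have hτ''sq : τ'' ^ 2 * (2 + c) < 4 := by
    have h1 : τ'' * Real.sqrt (2 + c) < 2 := by
      rw [hLdef, lt_div_iff₀ hsq] at hτ''L
      linarith
    have hx : 0 ≤ τ'' * Real.sqrt (2 + c) := mul_nonneg hτ''pos.le hsq.le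
    have key : τ'' ^ 2 * (2 + c) = (τ'' * Real.sqrt (2 + c)) ^ 2 := by
      rw [mul_pow, hsq2]
    have h4 : (τ'' * Real.sqrt (2 + c)) ^ 2 < 2 ^ 2 := pow_lt_pow_left₀ h1 hx (by norm_num)
    rw [key]; linarith only [h4]
  set ε : ℝ := 4 * c / τ'' ^ 2 - (2 * c + c ^ 2) with hεdef
  clear_value ε
  have hε : 0 < ε := by
    rw [hεdef, sub_pos, lt_div_iff₀ (pow_pos hτ''pos 2)]
    have h5 := mul_lt_mul_of_pos_left hτ''sq hc
    nlinarith [h5, hc]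
  set K : ℝ := ε / (τ'' * (2 + c) ^ 2) with hKdef
  clear_value K
  have hK : 0 < K := by
    rw [hKdef]
    exact div_pos hε (mul_pos hτ''pos (pow_pos h2c 2))
  set δ₂ : ℝ := K ^ ((1 - σ)⁻¹ : ℝ) with hδ₂def
  clear_value δ₂
  have h1σ : (0:ℝ) < 1 - σ := by linarith [hσ.2]
  have hδ₂ : 0 < δ₂ := by rw [hδ₂def]; exact Real.rpow_pos_of_pos hK _
  have hδ₂pow : δ₂ ^ (1 - σ : ℝ) = K := by
    rw [hδ₂def]; exact Real.rpow_inv_rpow hK.le h1σ.ne'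
  obtain ⟨δ₀, hδ₀pos, hδ₀⟩ := hsvr τ' hττ'
  refine ⟨Metric.ball bs (min δ₀ δ₂), Metric.ball_mem_nhds _ (lt_min hδ₀pos hδ₂), ?_⟩
  rintro a' ⟨ha'A, ha'U⟩ b' ⟨hb'proj, hb'U⟩ b hbB hbdist hbprojA
  set r : ℝ := ‖a' - b'‖ with hrdef
  clear_value r
  rcases eq_or_lt_of_le (norm_nonneg (a' - b')) with hr0 | hrpos
  · -- degenerate case r = 0
    have hz : a' - b' = 0 := by rw [← norm_eq_zero]; exact hr0.symm
    rw [hrdef, hz, inner_zero_left]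
    positivity
  -- main case 0 < r
  have hr : 0 < r := by rw [hrdef]; exact hrpos
  have ha'B : a' ∉ B := by
    intro h
    have h2 := hb'proj.2
    rw [Metric.infDist_zero_of_mem h] at h2
    linarith only [h2, hrpos]
  have ha'near : ‖a' - bs‖ < δ₀ := by
    have h3 := ha'U
    rw [Metric.mem_ball, dist_eq_norm] at h3
    exact lt_of_lt_of_le h3 (min_le_left _ _)
  have hrsmall : r < δ₂ := by
    have h1 : Metric.infDist a' B ≤ dist a' bs := Metric.infDist_le_dist_of_mem hbs.2
    have h2 := hb'proj.2
    have h3 := ha'U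
    rw [Metric.mem_ball, dist_eq_norm] at h3
    rw [dist_eq_norm] at h1
    rw [hrdef]
    calc ‖a' - b'‖ = Metric.infDist a' B := h2
    _ ≤ ‖a' - bs‖ := h1
    _ < δ₂ := lt_of_lt_of_le h3 (min_le_right _ _)
  have hsvr' := hδ₀ a' ha'A ha'near ha'B b' hb'proj
  rw [← hrdef] at hsvr'
  set P : ℝ := r ^ (σ : ℝ) with hPdef
  clear_value P
  have hP : 0 < P := by rw [hPdef]; exact Real.rpow_pos_of_pos hr _
  set d : EuclideanSpace ℝ (Fin n) := r⁻¹ • (a' - b') with hddef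
  clear_value d
  have hreach : ENNReal.ofReal (P / τ') ≤ reach B b' d := by
    rw [ENNReal.ofReal_div_of_pos hτ'pos]
    exact ENNReal.div_le_of_le_mul' hsvr'
  set t : ℝ := P / τ'' with htdef
  clear_value t
  have ht : 0 < t := by rw [htdef]; exact div_pos hP hτ''pos
  have hlt : ENNReal.ofReal t < ENNReal.ofReal (P / τ') := by
    rw [ENNReal.ofReal_lt_ofReal_iff (div_pos hP hτ'pos)]
    rw [htdef]
    exact div_lt_div_of_pos_left hP hτ'pos hτ'τ''
  have hltreach : ENNReal.ofReal t < reach B b' d := lt_of_lt_of_le hlt hreach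
  rw [reach, lt_sSup_iff] at hltreach
  obtain ⟨R, hRS, htR⟩ := hltreach
  have hproj : projSet B (b' + t • d) = {b'} := hRS t ht.le htR.le
  have hd : ‖d‖ = 1 := by
    rw [hddef, norm_smul, norm_inv, Real.norm_eq_abs, abs_of_pos hr, ← hrdef]
    field_simp
  have hard : a' - b' = r • d := by
    rw [hddef, smul_smul, mul_inv_cancel₀ (ne_of_gt hr), one_smul]
  have hb'mem : b' ∈ projSet B (b' + t • d) := by rw [hproj]; exact Set.mem_singleton _
  have hinf : Metric.infDist (b' + t • d) B = t := by
    have h2 := hb'mem.2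
    rw [add_sub_cancel_left, norm_smul, hd, Real.norm_eq_abs, abs_of_pos ht, mul_one] at h2
    exact h2.symm
  have hb_far : t ≤ ‖b' + t • d - b‖ := by
    have h4 : Metric.infDist (b' + t • d) B ≤ dist (b' + t • d) b :=
      Metric.infDist_le_dist_of_mem hbB
    rw [hinf, dist_eq_norm] at h4
    exact h4
  set s : ℝ := ‖b - b'‖ with hsdef
  clear_value s
  have hss0 : 0 ≤ s := by rw [hsdef]; exact norm_nonneg _
  have hkey : 2 * t * ⟪d, b - b'⟫ ≤ s ^ 2 := by
    have hsplit : b' + t • d - b = (b' - b) + t • d := by abel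
    have hexp := norm_add_sq_real (b' - b) (t • d)
    have hsq' : t ^ 2 ≤ ‖b' + t • d - b‖ ^ 2 := pow_le_pow_left₀ ht.le hb_far 2
    rw [hsplit] at hsq'
    have hi1 : ⟪b' - b, t • d⟫ = - (t * ⟪d, b - b'⟫) := by
      rw [real_inner_smul_right, real_inner_comm]
      have hneg : b' - b = -(b - b') := by abel
      rw [hneg, inner_neg_right]; ring
    have hn1 : ‖b' - b‖ = s := by rw [hsdef]; exact norm_sub_rev _ _
    have hn2 : ‖t • d‖ = t := by
      rw [norm_smul, hd, Real.norm_eq_abs, abs_of_pos ht, mul_one]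
    rw [hi1, hn1, hn2] at hexp
    linarith only [hexp, hsq']
  have hip : ⟪a' - b', b - b'⟫ = r * ⟪d, b - b'⟫ := by
    rw [hard, real_inner_smul_left]
  set Q : ℝ := r ^ (1 - σ : ℝ) with hQdef
  clear_value Q
  have hQ : 0 < Q := by rw [hQdef]; exact Real.rpow_pos_of_pos hr _
  have hPQ : P * Q = r := by
    rw [hPdef, hQdef, ← Real.rpow_add hr]
    norm_num
  have hip2 : ⟪a' - b', b - b'⟫ ≤ τ'' / 2 * Q * s ^ 2 := by
    rw [hip]
    have h1 : 0 ≤ Q * τ'' / 2 := by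
      apply div_nonneg (mul_nonneg hQ.le hτ''pos.le); norm_num
    have h2 := mul_le_mul_of_nonneg_left hkey h1
    rw [htdef] at h2
    have h3 : Q * τ'' / 2 * (2 * (P / τ'') * ⟪d, b - b'⟫) = P * Q * ⟪d, b - b'⟫ := by
      field_simp [hτ''pos.ne']
    rw [h3, hPQ] at h2
    linarith only [h2]
  have hsbound : s ≤ (2 + c) * r := by
    have hsplit : b - b' = (b - a') + (a' - b') := by abel
    have htri := norm_add_le (b - a') (a' - b')
    rw [← hsplit] at htri
    rw [hsdef, hrdef]
    rw [hrdef] at hbdist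
    calc ‖b - b'‖ ≤ ‖b - a'‖ + ‖a' - b'‖ := htri
    _ ≤ (1 + c) * ‖a' - b'‖ + ‖a' - b'‖ := by linarith only [hbdist]
    _ = (2 + c) * ‖a' - b'‖ := by ring
  have hs2 : s ^ 2 = ‖b - a'‖ ^ 2 - r ^ 2 + 2 * ⟪a' - b', b - b'⟫ := by
    have hsplit : b - b' = (b - a') + (a' - b') := by abel
    have hexp := norm_add_sq_real (b - a') (a' - b')
    rw [← hsplit] at hexp
    rw [← hsdef, ← hrdef] at hexp
    have hi : ⟪a' - b', b - b'⟫ = ⟪b - a', a' - b'⟫ + r ^ 2 := by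
      rw [hsplit, inner_add_right, real_inner_self_eq_norm_sq, ← hrdef,
        real_inner_comm (a' - b') (b - a')]
    linarith only [hexp, hi]
  have hQsmall : τ'' * Q * (2 + c) ^ 2 ≤ ε := by
    have h1 : Q < K := by
      rw [hQdef, ← hδ₂pow]
      exact Real.rpow_lt_rpow hr.le hrsmall h1σ
    have h2 : Q * (τ'' * (2 + c) ^ 2) < K * (τ'' * (2 + c) ^ 2) :=
      mul_lt_mul_of_pos_right h1 (mul_pos hτ''pos (pow_pos h2c 2))
    have h3 : K * (τ'' * (2 + c) ^ 2) = ε := by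
      rw [hKdef]; field_simp
    linarith only [h2, h3]
  have hs2bound : s ^ 2 ≤ 4 * c / τ'' ^ 2 * r ^ 2 := by
    have hba : ‖b - a'‖ ^ 2 ≤ ((1 + c) * r) ^ 2 :=
      pow_le_pow_left₀ (norm_nonneg _) hbdist 2
    have hss : s ^ 2 ≤ ((2 + c) * r) ^ 2 := pow_le_pow_left₀ hss0 hsbound 2
    have h1 : s ^ 2 ≤ (2 * c + c ^ 2) * r ^ 2 + τ'' * Q * s ^ 2 := by
      linarith only [hs2, hip2, hba]
    have h2 : τ'' * Q * s ^ 2 ≤ ε * r ^ 2 := by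
      calc τ'' * Q * s ^ 2 ≤ τ'' * Q * ((2 + c) * r) ^ 2 :=
        mul_le_mul_of_nonneg_left hss (mul_nonneg hτ''pos.le hQ.le)
      _ = τ'' * Q * (2 + c) ^ 2 * r ^ 2 := by ring
      _ ≤ ε * r ^ 2 := mul_le_mul_of_nonneg_right hQsmall (sq_nonneg r)
    have hεeq : (2 * c + c ^ 2 + ε) * r ^ 2 = 4 * c / τ'' ^ 2 * r ^ 2 := by
      rw [hεdef]; ring
    linarith only [h1, h2, hεeq]
  have hsc : Real.sqrt c ^ 2 = c := Real.sq_sqrt hc.le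
  have hscpos : 0 < Real.sqrt c := Real.sqrt_pos.mpr hc
  have hsfinal : τ'' * s ≤ 2 * Real.sqrt c * r := by
    have hM : (0:ℝ) ≤ 2 * Real.sqrt c / τ'' * r :=
      (mul_pos (div_pos (mul_pos two_pos hscpos) hτ''pos) hr).le
    have hMsq : (2 * Real.sqrt c / τ'' * r) ^ 2 = 4 * c / τ'' ^ 2 * r ^ 2 := by
      rw [show (2 * Real.sqrt c / τ'' * r) ^ 2
          = 4 * (Real.sqrt c ^ 2) / τ'' ^ 2 * r ^ 2 from by ring, hsc]
    have hsle : s ≤ 2 * Real.sqrt c / τ'' * r := by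
      have h6 : s ^ 2 ≤ (2 * Real.sqrt c / τ'' * r) ^ 2 := by rw [hMsq]; exact hs2bound
      by_contra hcon
      push_neg at hcon
      have h7 : (2 * Real.sqrt c / τ'' * r) ^ 2 < s ^ 2 := pow_lt_pow_left₀ hcon hM (by norm_num)
      linarith only [h6, h7]
    have h5 := mul_le_mul_of_nonneg_left hsle hτ''pos.le
    calc τ'' * s ≤ τ'' * (2 * Real.sqrt c / τ'' * r) := h5
    _ = 2 * Real.sqrt c * r := by field_simp
  have hrexp : r ^ (1 - σ + 1 : ℝ) = Q * r := by
    rw [hQdef, Real.rpow_add hr, Real.rpow_one]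
  rw [hrexp]
  calc ⟪a' - b', b - b'⟫ ≤ τ'' / 2 * Q * s ^ 2 := hip2
  _ ≤ Real.sqrt c * (Q * r) * s := by
    have h8 := mul_le_mul_of_nonneg_left hsfinal
      (div_nonneg (mul_nonneg hQ.le hss0) (by norm_num : (0:ℝ) ≤ 2))
    linarith only [h8]
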